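/- Suppose that T does not admit any fixed point free automorphism. Let f, g ∈ End^0(G). If the pair (f,g) is fixed point free, then the multigraph Γ_{f,g} is a tree. -/

import Mathlib

/-!
STATEMENT 5: Suppose `T` does not admit any fixed point free automorphism.
Let `f, g ∈ End⁰(G)`.  If the pair `(f, g)` is fixed point free, then the
multigraph `Γ_{f,g}` is a tree.

Setting: `n ≥ 1`, `T` a nontrivial finite group, `G = Tⁿ = (Fin n → T)`.
The vertex set `{0, 1, …, n}` is modelled by `Option (Fin n)`, with `none`
the distinguished vertex `0`.  An automorphism `φ` of `T` is fixed point
free iff `φ σ = σ ↔ σ = 1` for all `σ`.  A multigraph is a tree iff it is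
connected and has no cycle.
-/

/-- Adjacency in the multigraph whose `i`-th edge has ends `ends i`. -/
def MGraph.Adj {V : Type*} {n : ℕ} (ends : Fin n → Sym2 V) (a b : V) : Prop :=
  ∃ i, ends i = s(a, b)

/-- Two vertices are joined by a walk. -/
def MGraph.Reach {V : Type*} {n : ℕ} (ends : Fin n → Sym2 V) : V → V → Prop :=
  Relation.ReflTransGen (MGraph.Adj ends)

/-- The multigraph is connected. -/
def MGraph.Connected {V : Type*} {n : ℕ} (ends : Fin n → Sym2 V) : Prop :=
  ∀ a b : V, MGraph.Reach ends a b

/-- The multigraph has a cycle (see STATEMENT 3's file for discussion):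
`m + 1` pairwise distinct edges and `m + 1` pairwise distinct vertices
arranged cyclically. -/
def MGraph.HasCycle {V : Type*} {n : ℕ} (ends : Fin n → Sym2 V) : Prop :=
  ∃ (m : ℕ) (e : Fin (m + 1) → Fin n) (v : Fin (m + 1) → V),
    Function.Injective e ∧ Function.Injective v ∧
      ∀ k : Fin (m + 1), ends (e k) = s(v k, v (k + 1))

/-- The multigraph is a tree: connected with no cycle. -/
def MGraph.IsTree {V : Type*} {n : ℕ} (ends : Fin n → Sym2 V) : Prop :=
  MGraph.Connected ends ∧ ¬ MGraph.HasCycle ends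

/-- `(θ, φ)` witnesses that `f` lies in `End⁰(G)`. -/
def End0Data {n : ℕ} {T : Type*} [Group T] (θ : Fin n → Option (Fin n))
    (φ : Fin n → (T →* T)) (f : (Fin n → T) →* (Fin n → T)) : Prop :=
  (∀ i, (θ i).isSome → Function.Bijective (φ i)) ∧
    ∀ (x : Fin n → T) (i : Fin n), f x i = (θ i).elim 1 fun j => φ i (x j)

/-! ### Auxiliary general multigraph notions (arbitrary edge index type) -/

section MultiGraph

/-- generalized adjacency (same as `MGraph.Adj` but with arbitrary edge index type). -/
def GAdj {V E : Type*} (ends : E → Sym2 V) (x y : V) : Prop := ∃ i, ends i = s(x, y)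

def GReach {V E : Type*} (ends : E → Sym2 V) : V → V → Prop :=
  Relation.ReflTransGen (GAdj ends)

def GConnected {V E : Type*} (ends : E → Sym2 V) : Prop := ∀ x y, GReach ends x y

def GHasCycle {V E : Type*} (ends : E → Sym2 V) : Prop :=
  ∃ (m : ℕ) (e : Fin (m + 1) → E) (v : Fin (m + 1) → V),
    Function.Injective e ∧ Function.Injective v ∧
      ∀ k : Fin (m + 1), ends (e k) = s(v k, v (k + 1))

def GIsTree {V E : Type*} (ends : E → Sym2 V) : Prop := GConnected ends ∧ ¬ GHasCycle ends

end MultiGraph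

/-! ### Edge constraint systems -/

section Sys

/-- Solution of an edge-constraint system. -/
def CSol {T : Type*} [Group T] {V E : Type*} (a b : E → V) (β : E → MulAut T)
    (σ : V → T) : Prop :=
  ∀ i, σ (b i) = β i (σ (a i))

/-- degree of a vertex in the multigraph with edge `i` joining `a i` and `b i`. -/
def cdeg {V E : Type*} [Fintype E] [DecidableEq V] (a b : E → V) (v : V) : ℕ :=
  ∑ i, ((if a i = v then 1 else 0) + (if b i = v then 1 else 0))

lemma sum_cdeg {V E : Type*} [Fintype V] [Fintype E] [DecidableEq V] (a b : E → V) :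
    ∑ v, cdeg a b v = 2 * Fintype.card E := by
  unfold cdeg
  rw [Finset.sum_comm]
  have h : ∀ i : E, (∑ v, ((if a i = v then 1 else 0) + (if b i = v then 1 else 0))) = 2 := by
    intro i
    rw [Finset.sum_add_distrib, Finset.sum_ite_eq, Finset.sum_ite_eq]
    simp
  rw [Finset.sum_congr rfl fun i _ => h i, Finset.sum_const, smul_eq_mul, Finset.card_univ,
    mul_comm]

lemma not_endpoint_of_cdeg_zero {V E : Type*} [Fintype E] [DecidableEq V] {a b : E → V} {v : V}
    (h : cdeg a b v = 0) (i : E) : a i ≠ v ∧ b i ≠ v := by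
  unfold cdeg at h
  rw [Finset.sum_eq_zero_iff] at h
  have hi := h i (Finset.mem_univ i)
  constructor <;> intro hh <;> simp [hh] at hi

lemma pair_le_cdeg {V E : Type*} [Fintype E] [DecidableEq V] [DecidableEq E] (a b : E → V)
    (v : V) {i j : E} (hij : i ≠ j) :
    ((if a i = v then 1 else 0) + (if b i = v then 1 else 0)) +
      ((if a j = v then 1 else 0) + (if b j = v then 1 else 0)) ≤ cdeg a b v := by
  unfold cdeg
  rw [← Finset.sum_pair (f := fun j => ((if a j = v then 1 else 0) + (if b j = v then 1 else 0)))
    hij]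
  exact Finset.sum_le_sum_of_subset (Finset.subset_univ _)

lemma sum_eq_one_pinpoint {α : Type*} [Fintype α] [DecidableEq α] (t : α → ℕ)
    (h : ∑ i, t i = 1) : ∃ e0, t e0 = 1 ∧ ∀ i, i ≠ e0 → t i = 0 := by
  have hex : ∃ e0, t e0 ≠ 0 := by
    by_contra hc
    push_neg at hc
    rw [Finset.sum_eq_zero (fun i _ => hc i)] at h
    omega
  obtain ⟨e0, he0⟩ := hex
  have h1 : t e0 ≤ 1 := h ▸ Finset.single_le_sum (fun _ _ => Nat.zero_le _) (Finset.mem_univ e0)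
  have hle : ∀ i, i ≠ e0 → t e0 + t i ≤ 1 := by
    intro i hi
    calc t e0 + t i = ∑ x ∈ ({e0, i} : Finset α), t x := (Finset.sum_pair (Ne.symm hi)).symm
      _ ≤ ∑ x, t x := Finset.sum_le_sum_of_subset (Finset.subset_univ _)
      _ = 1 := h
  exact ⟨e0, by omega, fun i hi => by have := hle i hi; omega⟩

lemma exists_fixed {T : Type*} [Group T]
    (hT : ¬ ∃ φ : MulAut T, ∀ σ : T, φ σ = σ ↔ σ = 1) (φ : MulAut T) :
    ∃ τ : T, τ ≠ 1 ∧ φ τ = τ := by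
  by_contra h
  push_neg at h
  refine hT ⟨φ, fun σ => ⟨fun hfix => ?_, fun h1 => by rw [h1]; exact map_one φ⟩⟩
  by_contra hne
  exact h σ hne hfix

end Sys

/-! ### Helper functions for modifying solutions -/

section Helpers

variable {T : Type*} [Group T] {V : Type*} [DecidableEq V]

/-- an assignment which is `τ` at `w` and `1` elsewhere. -/
def spike (w : V) (τ : T) (v : V) : T := if v = w then τ else 1

lemma spike_w (w : V) (τ : T) : spike w τ w = τ := if_pos rfl

lemma spike_ne (w : V) (τ : T) {v : V} (h : v ≠ w) : spike w τ v = 1 := if_neg h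

/-- extend an assignment on `{v // v ≠ w}` by the value `c` at `w`. -/
def extFun (w : V) (c : T) (σ' : {v : V // v ≠ w} → T) (v : V) : T :=
  if h : v = w then c else σ' ⟨v, h⟩

lemma extFun_w (w : V) (c : T) (σ' : {v : V // v ≠ w} → T) : extFun w c σ' w = c := dif_pos rfl

lemma extFun_ne (w : V) (c : T) (σ' : {v : V // v ≠ w} → T) {v : V} (h : v ≠ w) :
    extFun w c σ' v = σ' ⟨v, h⟩ := dif_neg h

/-- redirection map for edge contraction. -/
def vredir (a0 b0 : V) (hne : a0 ≠ b0) (v : V) : {v : V // v ≠ b0} :=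
  if h : v = b0 then ⟨a0, hne⟩ else ⟨v, h⟩

lemma vredir_of_ne (a0 b0 : V) (hne : a0 ≠ b0) {x : V} (h : x ≠ b0) :
    vredir a0 b0 hne x = ⟨x, h⟩ := dif_neg h

lemma vredir_b0 (a0 b0 : V) (hne : a0 ≠ b0) : vredir a0 b0 hne b0 = ⟨a0, hne⟩ := dif_pos rfl

lemma vredir_eq_mk_iff (a0 b0 : V) (hne : a0 ≠ b0) {x v : V} (hvb : v ≠ b0) :
    (vredir a0 b0 hne x = ⟨v, hvb⟩) ↔ (x = v ∨ (x = b0 ∧ v = a0)) := by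
  unfold vredir
  by_cases hx : x = b0
  · rw [dif_pos hx, Subtype.mk_eq_mk]
    constructor
    · intro h
      exact Or.inr ⟨hx, h.symm⟩
    · rintro (h | ⟨_, h⟩)
      · exact absurd (h ▸ hx) hvb
      · exact h.symm
  · rw [dif_neg hx, Subtype.mk_eq_mk]
    constructor
    · intro h
      exact Or.inl h
    · rintro (h | ⟨hb, _⟩)
      · exact h
      · exact absurd hb hx

/-- gauge factor for edge contraction. -/
def gaug (b0 : V) (γ : MulAut T) (x : V) : MulAut T := if x = b0 then γ else 1

lemma gaug_b0 (b0 : V) (γ : MulAut T) : gaug b0 γ b0 = γ := if_pos rfl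

lemma gaug_of_ne (b0 : V) (γ : MulAut T) {x : V} (h : x ≠ b0) : gaug b0 γ x = 1 := if_neg h

/-- the extension of a solution of the contracted system to the original system. -/
def contractExt (a0 b0 : V) (hne : a0 ≠ b0) (γ : MulAut T) (σ' : {v : V // v ≠ b0} → T)
    (x : V) : T :=
  gaug b0 γ x (σ' (vredir a0 b0 hne x))

lemma contractExt_ne (a0 b0 : V) (hne : a0 ≠ b0) (γ : MulAut T) (σ' : {v : V // v ≠ b0} → T)
    {x : V} (h : x ≠ b0) : contractExt a0 b0 hne γ σ' x = σ' ⟨x, h⟩ := by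
  rw [contractExt, gaug_of_ne _ _ h, vredir_of_ne _ _ _ h, MulAut.one_apply]

lemma contractExt_b0 (a0 b0 : V) (hne : a0 ≠ b0) (γ : MulAut T) (σ' : {v : V // v ≠ b0} → T) :
    contractExt a0 b0 hne γ σ' b0 = γ (σ' ⟨a0, hne⟩) := by
  rw [contractExt, gaug_b0, vredir_b0]

end Helpers

/-! ### The contraction step -/

section Contract

variable {T : Type*} [Group T] {V E : Type*} [DecidableEq V] [DecidableEq E]

lemma contract_csol (a b : E → V) (β : E → MulAut T) (e0 : E) (hne : a e0 ≠ b e0)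
    (σ' : {v : V // v ≠ b e0} → T)
    (hsol' : CSol (fun i : {i : E // i ≠ e0} => vredir (a e0) (b e0) hne (a i.1))
      (fun i : {i : E // i ≠ e0} => vredir (a e0) (b e0) hne (b i.1))
      (fun i : {i : E // i ≠ e0} =>
        (gaug (b e0) (β e0) (b i.1))⁻¹ * β i.1 * gaug (b e0) (β e0) (a i.1)) σ') :
    CSol a b β (contractExt (a e0) (b e0) hne (β e0) σ') := by
  intro j
  by_cases hj : j = e0
  · subst hj
    rw [contractExt_b0, contractExt_ne _ _ _ _ _ hne]
  · have hc := hsol' ⟨j, hj⟩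
    show contractExt (a e0) (b e0) hne (β e0) σ' (b j) =
      β j (contractExt (a e0) (b e0) hne (β e0) σ' (a j))
    unfold contractExt
    rw [hc, MulAut.mul_apply, MulAut.mul_apply, MulAut.apply_inv_self]

lemma contract_deg [Fintype E] (a b : E → V) (e0 : E) (hne : a e0 ≠ b e0)
    (hdeg : ∀ v, cdeg a b v = 2) (v' : {v : V // v ≠ b e0}) :
    cdeg (fun i : {i : E // i ≠ e0} => vredir (a e0) (b e0) hne (a i.1))
      (fun i : {i : E // i ≠ e0} => vredir (a e0) (b e0) hne (b i.1)) v' = 2 := by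
  obtain ⟨v, hvb⟩ := v'
  have hstep : cdeg (fun i : {i : E // i ≠ e0} => vredir (a e0) (b e0) hne (a i.1))
      (fun i : {i : E // i ≠ e0} => vredir (a e0) (b e0) hne (b i.1)) ⟨v, hvb⟩ =
      ∑ i ∈ Finset.univ.erase e0,
        ((if vredir (a e0) (b e0) hne (a i) = (⟨v, hvb⟩ : {v : V // v ≠ b e0}) then 1 else 0) +
          (if vredir (a e0) (b e0) hne (b i) = (⟨v, hvb⟩ : {v : V // v ≠ b e0}) then 1 else 0)) := by
    rw [cdeg]
    exact (Finset.sum_subtype (Finset.univ.erase e0) (fun x => by simp)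
      (fun i => ((if vredir (a e0) (b e0) hne (a i) = (⟨v, hvb⟩ : {v : V // v ≠ b e0})
          then 1 else 0) +
        (if vredir (a e0) (b e0) hne (b i) = (⟨v, hvb⟩ : {v : V // v ≠ b e0})
          then 1 else 0)))).symm
  rw [hstep]
  by_cases hva : v = a e0
  · have h1 : ∀ x : V,
        ((if vredir (a e0) (b e0) hne x = (⟨v, hvb⟩ : {v : V // v ≠ b e0}) then (1:ℕ) else 0)) =
          (if x = a e0 then 1 else 0) + (if x = b e0 then 1 else 0) := by
      intro x
      rw [if_congr (vredir_eq_mk_iff _ _ hne hvb) rfl rfl]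
      by_cases hx1 : x = a e0 <;> by_cases hx2 : x = b e0
      · exact absurd (hx1.symm.trans hx2) hne
      · rw [if_pos (Or.inl (hx1.trans hva.symm)), if_pos hx1, if_neg hx2]
      · rw [if_pos (Or.inr ⟨hx2, hva⟩), if_neg hx1, if_pos hx2]
      · rw [if_neg ?_, if_neg hx1, if_neg hx2]
        rintro (h | ⟨h, -⟩)
        · exact hx1 (h.trans hva)
        · exact hx2 h
    have hcongr : ∀ i ∈ Finset.univ.erase e0,
        ((if vredir (a e0) (b e0) hne (a i) = (⟨v, hvb⟩ : {v : V // v ≠ b e0}) then (1:ℕ) else 0) +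
          (if vredir (a e0) (b e0) hne (b i) = (⟨v, hvb⟩ : {v : V // v ≠ b e0}) then 1 else 0)) =
        (((if a i = a e0 then 1 else 0) + (if b i = a e0 then 1 else 0)) +
          ((if a i = b e0 then 1 else 0) + (if b i = b e0 then 1 else 0))) := by
      intro i _
      rw [h1 (a i), h1 (b i)]
      ring
    rw [Finset.sum_congr rfl hcongr]
    have hadd : ((((if a e0 = a e0 then (1:ℕ) else 0) + (if b e0 = a e0 then 1 else 0)) +
        ((if a e0 = b e0 then 1 else 0) + (if b e0 = b e0 then 1 else 0))) +
        ∑ i ∈ Finset.univ.erase e0,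
          (((if a i = a e0 then (1:ℕ) else 0) + (if b i = a e0 then 1 else 0)) +
            ((if a i = b e0 then 1 else 0) + (if b i = b e0 then 1 else 0)))) =
        ∑ i : E, (((if a i = a e0 then (1:ℕ) else 0) + (if b i = a e0 then 1 else 0)) +
            ((if a i = b e0 then 1 else 0) + (if b i = b e0 then 1 else 0))) :=
      Finset.add_sum_erase Finset.univ
        (fun i => (((if a i = a e0 then (1:ℕ) else 0) + (if b i = a e0 then 1 else 0)) +
          ((if a i = b e0 then 1 else 0) + (if b i = b e0 then 1 else 0))))
        (Finset.mem_univ e0)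
    have hsum_univ : ∑ i : E, (((if a i = a e0 then (1:ℕ) else 0) +
        (if b i = a e0 then 1 else 0)) +
        ((if a i = b e0 then 1 else 0) + (if b i = b e0 then 1 else 0))) =
        cdeg a b (a e0) + cdeg a b (b e0) := by
      rw [Finset.sum_add_distrib, cdeg, cdeg]
    have he0term : (((if a e0 = a e0 then (1:ℕ) else 0) + (if b e0 = a e0 then 1 else 0)) +
        ((if a e0 = b e0 then 1 else 0) + (if b e0 = b e0 then 1 else 0))) = 2 := by
      rw [if_pos rfl, if_pos rfl, if_neg hne, if_neg (Ne.symm hne)]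
    rw [hsum_univ, hdeg, hdeg, he0term] at hadd
    omega
  · have h1 : ∀ x : V,
        ((if vredir (a e0) (b e0) hne x = (⟨v, hvb⟩ : {v : V // v ≠ b e0}) then (1:ℕ) else 0)) =
          (if x = v then 1 else 0) := by
      intro x
      rw [if_congr (vredir_eq_mk_iff _ _ hne hvb) rfl rfl]
      refine if_congr ?_ rfl rfl
      constructor
      · rintro (h | ⟨_, h⟩)
        · exact h
        · exact absurd h hva
      · exact Or.inl
    have hcongr : ∀ i ∈ Finset.univ.erase e0,
        ((if vredir (a e0) (b e0) hne (a i) = (⟨v, hvb⟩ : {v : V // v ≠ b e0}) then (1:ℕ) else 0) +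
          (if vredir (a e0) (b e0) hne (b i) = (⟨v, hvb⟩ : {v : V // v ≠ b e0}) then 1 else 0)) =
        ((if a i = v then 1 else 0) + (if b i = v then 1 else 0)) := by
      intro i _
      rw [h1 (a i), h1 (b i)]
    rw [Finset.sum_congr rfl hcongr]
    have hadd : (((if a e0 = v then (1:ℕ) else 0) + (if b e0 = v then 1 else 0)) +
        ∑ i ∈ Finset.univ.erase e0,
          ((if a i = v then (1:ℕ) else 0) + (if b i = v then 1 else 0))) =
        ∑ i : E, ((if a i = v then (1:ℕ) else 0) + (if b i = v then 1 else 0)) :=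
      Finset.add_sum_erase Finset.univ
        (fun i => ((if a i = v then (1:ℕ) else 0) + (if b i = v then 1 else 0)))
        (Finset.mem_univ e0)
    have hsum_univ : ∑ i : E, ((if a i = v then (1:ℕ) else 0) + (if b i = v then 1 else 0)) =
        cdeg a b v := by rw [cdeg]
    have he0term : ((if a e0 = v then (1:ℕ) else 0) + (if b e0 = v then 1 else 0)) = 0 := by
      rw [if_neg (fun h => hva h.symm), if_neg (Ne.symm hvb)]
    rw [hsum_univ, hdeg, he0term] at hadd
    omega

end Contract

/-! ### Nontrivial solutions on 2-regular graphs -/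

lemma cycle_sol {T : Type*} [Group T]
    (hT : ¬ ∃ φ : MulAut T, ∀ σ : T, φ σ = σ ↔ σ = 1) :
    ∀ (N : ℕ) (V E : Type) [Fintype V] [Fintype E] [DecidableEq V] [DecidableEq E],
      Nonempty V → ∀ (a b : E → V) (β : E → MulAut T), Fintype.card E = N →
      (∀ v, cdeg a b v = 2) →
      ∃ σ : V → T, CSol a b β σ ∧ σ ≠ 1 := by
  intro N
  induction N using Nat.strong_induction_on with
  | _ N IH =>
  intro V E _ _ _ _ hV a b β hcard hdeg
  have hVE : Fintype.card V = Fintype.card E := by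
    have h1 := sum_cdeg a b
    rw [Finset.sum_congr rfl fun v _ => hdeg v, Finset.sum_const, smul_eq_mul,
      Finset.card_univ] at h1
    omega
  have hV1 : 1 ≤ Fintype.card V := Fintype.card_pos
  haveI hEne : Nonempty E := Fintype.card_pos_iff.mp (by omega)
  by_cases hloop : ∀ i : E, a i = b i
  · -- all loops case
    obtain ⟨i0⟩ := hEne
    obtain ⟨τ, hτ1, hτfix⟩ := exists_fixed hT (β i0)
    refine ⟨spike (a i0) τ, fun i => ?_, fun h => ?_⟩
    · by_cases hi : i = i0
      · subst hi
        rw [← hloop i, spike_w, hτfix]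
      · have hne : a i ≠ a i0 := by
          intro hh
          have hp := pair_le_cdeg a b (a i0) hi
          rw [hdeg (a i0)] at hp
          rw [hh, ← hloop i, hh, ← hloop i0] at hp
          simp at hp
        rw [← hloop i, spike_ne _ _ hne, map_one]
    · have h0 := congrFun h (a i0)
      rw [spike_w] at h0
      exact hτ1 h0
  · push_neg at hloop
    obtain ⟨e0, hne⟩ := hloop
    have hcard' : Fintype.card {i : E // i ≠ e0} = N - 1 := by
      rw [Fintype.card_subtype, Finset.filter_ne', Finset.card_erase_of_mem (Finset.mem_univ e0),
        Finset.card_univ, hcard]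
    obtain ⟨σ', hsol', hσ'⟩ := IH (N - 1) (by omega) {v : V // v ≠ b e0} {i : E // i ≠ e0}
      ⟨⟨a e0, hne⟩⟩
      (fun i => vredir (a e0) (b e0) hne (a i.1))
      (fun i => vredir (a e0) (b e0) hne (b i.1))
      (fun i => (gaug (b e0) (β e0) (b i.1))⁻¹ * β i.1 * gaug (b e0) (β e0) (a i.1))
      hcard' (contract_deg a b e0 hne hdeg)
    refine ⟨contractExt (a e0) (b e0) hne (β e0) σ', contract_csol a b β e0 hne σ' hsol',
      fun h => ?_⟩
    have hex : ∃ u : {v : V // v ≠ b e0}, σ' u ≠ 1 := by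
      by_contra hcc
      push_neg at hcc
      exact hσ' (funext fun u => hcc u)
    obtain ⟨u, hu⟩ := hex
    have h0 := congrFun h u.1
    rw [contractExt_ne _ _ _ _ _ u.2] at h0
    exact hu (by simpa using h0)

/-! ### The main abstract lemma -/

lemma tree_of_unique {T : Type*} [Group T] [Nontrivial T]
    (hT : ¬ ∃ φ : MulAut T, ∀ σ : T, φ σ = σ ↔ σ = 1) :
    ∀ (N : ℕ) (V E : Type) [Fintype V] [Fintype E] [DecidableEq V] [DecidableEq E]
      (v0 : V) (a b : E → V) (β : E → MulAut T),
      Fintype.card E = N → Fintype.card V = N + 1 →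
      (∀ σ : V → T, σ v0 = 1 → CSol a b β σ → σ = 1) →
      GIsTree (fun i => s(a i, b i)) := by
  intro N
  induction N using Nat.strong_induction_on with
  | _ N IH =>
  intro V E _ _ _ _ v0 a b β hcE hcV Huniq
  rcases Nat.eq_zero_or_pos N with hN | hN
  · subst hN
    haveI : IsEmpty E := Fintype.card_eq_zero_iff.mp hcE
    haveI : Subsingleton V := Fintype.card_le_one_iff_subsingleton.mp (by omega)
    constructor
    · intro x y
      have hxy : x = y := Subsingleton.elim x y
      rw [hxy]
      exact Relation.ReflTransGen.refl
    · rintro ⟨m, e, v, -, -, -⟩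
      exact (IsEmpty.false (e 0)).elim
  by_cases hdeg0 : ∃ w, w ≠ v0 ∧ cdeg a b w = 0
  · obtain ⟨w, hw, h0⟩ := hdeg0
    obtain ⟨τ, hτ⟩ := exists_ne (1 : T)
    have hcontra := Huniq (spike w τ)
      (spike_ne w τ (fun hh => hw hh.symm))
      (by
        intro i
        have hep := not_endpoint_of_cdeg_zero h0 i
        rw [spike_ne _ _ hep.2, spike_ne _ _ hep.1, map_one])
    have hcw := congrFun hcontra w
    rw [spike_w] at hcw
    exact absurd hcw hτ
  by_cases hdeg1 : ∃ w, w ≠ v0 ∧ cdeg a b w = 1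
  · -- leaf case
    obtain ⟨w, hw, h1⟩ := hdeg1
    rw [cdeg] at h1
    obtain ⟨e0, he0, hrest⟩ := sum_eq_one_pinpoint _ h1
    have hrest' : ∀ i, i ≠ e0 → a i ≠ w ∧ b i ≠ w := by
      intro i hi
      have hz := hrest i hi
      constructor <;> intro hh <;> simp [hh] at hz
    have hone : (a e0 = w ∧ b e0 ≠ w) ∨ (a e0 ≠ w ∧ b e0 = w) := by
      by_cases h1a : a e0 = w <;> by_cases h1b : b e0 = w <;>
        simp [h1a, h1b] at he0 ⊢
    obtain ⟨u, hu_ne, hu_ends⟩ : ∃ u, u ≠ w ∧ s(a e0, b e0) = s(w, u) := by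
      rcases hone with ⟨h1a, h1b⟩ | ⟨h1a, h1b⟩
      · exact ⟨b e0, h1b, by rw [h1a]⟩
      · exact ⟨a e0, h1a, by rw [h1b, Sym2.eq_swap]⟩
    have hv0w : v0 ≠ w := fun h => hw h.symm
    have hcE' : Fintype.card {i : E // i ≠ e0} = N - 1 := by
      rw [Fintype.card_subtype, Finset.filter_ne', Finset.card_erase_of_mem (Finset.mem_univ e0),
        Finset.card_univ, hcE]
    have hcV' : Fintype.card {v : V // v ≠ w} = (N - 1) + 1 := by
      rw [Fintype.card_subtype, Finset.filter_ne', Finset.card_erase_of_mem (Finset.mem_univ w),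
        Finset.card_univ, hcV]
      omega
    have Huniq' : ∀ σ' : {v : V // v ≠ w} → T, σ' ⟨v0, hv0w⟩ = 1 →
        CSol (fun i : {i : E // i ≠ e0} => (⟨a i.1, (hrest' i.1 i.2).1⟩ : {v : V // v ≠ w}))
          (fun i : {i : E // i ≠ e0} => (⟨b i.1, (hrest' i.1 i.2).2⟩ : {v : V // v ≠ w}))
          (fun i : {i : E // i ≠ e0} => β i.1) σ' → σ' = 1 := by
      intro σ' h0' hsol'
      rcases hone with ⟨h1a, h1b⟩ | ⟨h1a, h1b⟩
      · have hs : extFun w ((β e0)⁻¹ (σ' ⟨b e0, h1b⟩)) σ' = (1 : V → T) := by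
          apply Huniq
          · rw [extFun_ne _ _ _ hv0w]
            exact h0'
          · intro i
            by_cases hi : i = e0
            · subst hi
              rw [extFun_ne _ _ _ h1b, h1a, extFun_w, MulAut.apply_inv_self]
            · rw [extFun_ne _ _ _ (hrest' i hi).2, extFun_ne _ _ _ (hrest' i hi).1]
              exact hsol' ⟨i, hi⟩
        funext x
        have hx := congrFun hs x.1
        rw [extFun_ne _ _ _ x.2] at hx
        simpa using hx
      · have hs : extFun w (β e0 (σ' ⟨a e0, h1a⟩)) σ' = (1 : V → T) := by
          apply Huniq
          · rw [extFun_ne _ _ _ hv0w]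
            exact h0'
          · intro i
            by_cases hi : i = e0
            · subst hi
              rw [h1b, extFun_w, extFun_ne _ _ _ h1a]
            · rw [extFun_ne _ _ _ (hrest' i hi).2, extFun_ne _ _ _ (hrest' i hi).1]
              exact hsol' ⟨i, hi⟩
        funext x
        have hx := congrFun hs x.1
        rw [extFun_ne _ _ _ x.2] at hx
        simpa using hx
    have Htree' := IH (N - 1) (by omega) {v : V // v ≠ w} {i : E // i ≠ e0} ⟨v0, hv0w⟩
      (fun i => ⟨a i.1, (hrest' i.1 i.2).1⟩) (fun i => ⟨b i.1, (hrest' i.1 i.2).2⟩)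
      (fun i => β i.1) hcE' hcV' Huniq'
    constructor
    · -- connectivity
      have hlift : ∀ (x y : {v : V // v ≠ w}),
          GReach (fun i : {i : E // i ≠ e0} =>
            s((⟨a i.1, (hrest' i.1 i.2).1⟩ : {v : V // v ≠ w}),
              (⟨b i.1, (hrest' i.1 i.2).2⟩ : {v : V // v ≠ w}))) x y →
          GReach (fun i : E => s(a i, b i)) x.1 y.1 := by
        intro x y h
        refine Relation.ReflTransGen.lift Subtype.val (fun p q hpq => ?_) _ _ h
        obtain ⟨i, hi⟩ := hpq
        refine ⟨i.1, ?_⟩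
        have hmap := congrArg (Sym2.map (Subtype.val : {v : V // v ≠ w} → V)) hi
        simpa [Sym2.map_pair_eq] using hmap
      have hAdjwu : GAdj (fun i : E => s(a i, b i)) w u := ⟨e0, hu_ends⟩
      have hsym : Symmetric (GReach (fun i : E => s(a i, b i))) :=
        fun x y hxy => (@Relation.ReflTransGen.stdSymm _ (GAdj (fun i : E => s(a i, b i))) ⟨
          (fun p q hpq => by obtain ⟨i, h⟩ := hpq; exact ⟨i, h.trans Sym2.eq_swap⟩)⟩).symm x y hxy
      have hrepr : ∀ x : V, ∃ x' : {v : V // v ≠ w},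
          GReach (fun i : E => s(a i, b i)) x x'.1 := by
        intro x
        by_cases hx : x = w
        · subst hx
          exact ⟨⟨u, hu_ne⟩, Relation.ReflTransGen.single hAdjwu⟩
        · exact ⟨⟨x, hx⟩, Relation.ReflTransGen.refl⟩
      intro x y
      obtain ⟨x', hx'⟩ := hrepr x
      obtain ⟨y', hy'⟩ := hrepr y
      exact hx'.trans ((hlift x' y' (Htree'.1 x' y')).trans (hsym hy'))
    · -- no cycle
      rintro ⟨m, e, v, einj, vinj, hends⟩
      by_cases hvw : ∃ k, v k = w
      · obtain ⟨k, hk⟩ := hvw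
        rcases Nat.eq_zero_or_pos m with hm | hm
        · subst hm
          haveI hsing : Subsingleton (Fin (0 + 1)) := Fin.subsingleton_one
          have h00 : s(a (e k), b (e k)) = s(v k, v (k + 1)) := hends k
          have hsk : v (k + 1) = v k := congrArg v (Subsingleton.elim _ _)
          rw [hsk, hk] at h00
          have hab : a (e k) = w ∧ b (e k) = w := by
            rcases Sym2.eq_iff.mp h00 with ⟨hh1, hh2⟩ | ⟨hh1, hh2⟩ <;> exact ⟨hh1, hh2⟩
          have h2 : ((if a (e k) = w then 1 else 0) + (if b (e k) = w then 1 else 0) : ℕ) = 2 := by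
            rw [if_pos hab.1, if_pos hab.2]
          by_cases hek : e k = e0
          · rw [hek] at h2
            omega
          · have := hrest _ hek
            omega
        · have h1ne : (1 : Fin (m + 1)) ≠ 0 := by
            intro hco
            have hco' := congrArg Fin.val hco
            rw [Fin.val_one', Fin.val_zero, Nat.mod_eq_of_lt (by omega)] at hco'
            omega
          have hek : e k = e0 := by
            by_contra hc
            have hm1 : w ∈ s(a (e k), b (e k)) := by
              have hendk : s(a (e k), b (e k)) = s(v k, v (k + 1)) := hends k
              rw [hendk]
              exact Sym2.mem_iff.mpr (Or.inl hk.symm)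
            rcases Sym2.mem_iff.mp hm1 with h | h
            · exact (hrest' _ hc).1 h.symm
            · exact (hrest' _ hc).2 h.symm
          have hek1 : e (k - 1) = e0 := by
            by_contra hc
            have hsk : (k - 1) + 1 = k := sub_add_cancel k 1
            have hm1 : w ∈ s(a (e (k - 1)), b (e (k - 1))) := by
              have hendk : s(a (e (k - 1)), b (e (k - 1))) = s(v (k - 1), v ((k - 1) + 1)) :=
                hends (k - 1)
              rw [hendk, hsk]
              exact Sym2.mem_iff.mpr (Or.inr hk.symm)
            rcases Sym2.mem_iff.mp hm1 with h | h
            · exact (hrest' _ hc).1 h.symm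
            · exact (hrest' _ hc).2 h.symm
          have hkeq : k - 1 = k := einj (hek1.trans hek.symm)
          have hksucc : k - 1 + 1 = k + 1 := by rw [hkeq]
          rw [sub_add_cancel] at hksucc
          have h01 : (0 : Fin (m + 1)) = 1 :=
            add_left_cancel (a := k) (by rw [add_zero]; exact hksucc)
          exact h1ne h01.symm
      · push_neg at hvw
        have heknot : ∀ k, e k ≠ e0 := by
          intro k hk
          have hwk : w ∈ s(v k, v (k + 1)) := by
            have hendk : s(a (e k), b (e k)) = s(v k, v (k + 1)) := hends k
            rw [← hendk, hk]
            rcases hone with ⟨h1a, _⟩ | ⟨_, h1b⟩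
            · exact Sym2.mem_iff.mpr (Or.inl h1a.symm)
            · exact Sym2.mem_iff.mpr (Or.inr h1b.symm)
          rcases Sym2.mem_iff.mp hwk with h | h
          · exact hvw k h.symm
          · exact hvw (k + 1) h.symm
        refine Htree'.2 ⟨m, fun k => ⟨e k, heknot k⟩, fun k => ⟨v k, hvw k⟩, ?_, ?_, ?_⟩
        · intro p q hpq
          exact einj (congrArg Subtype.val hpq)
        · intro p q hpq
          exact vinj (congrArg Subtype.val hpq)
        · intro k
          apply Sym2.map.injective (Subtype.val_injective)
          have hendk : s(a (e k), b (e k)) = s(v k, v (k + 1)) := hends k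
          simpa [Sym2.map_pair_eq] using hendk
  · -- remaining case: every non-root vertex has degree ≥ 2; contradiction
    push_neg at hdeg0 hdeg1
    have h2le : ∀ w, w ≠ v0 → 2 ≤ cdeg a b w := by
      intro w hw
      have hx0 := hdeg0 w hw
      have hx1 := hdeg1 w hw
      omega
    have hsum := sum_cdeg a b
    rw [hcE] at hsum
    have hS : (Finset.univ.erase v0).card = N := by
      rw [Finset.card_erase_of_mem (Finset.mem_univ v0), Finset.card_univ, hcV]
      omega
    have hsplit : cdeg a b v0 + ∑ x ∈ Finset.univ.erase v0, cdeg a b x = ∑ x, cdeg a b x :=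
      Finset.add_sum_erase Finset.univ (cdeg a b) (Finset.mem_univ v0)
    have hlow : 2 * N ≤ ∑ w ∈ Finset.univ.erase v0, cdeg a b w := by
      have hcn := Finset.card_nsmul_le_sum (Finset.univ.erase v0) (fun x => cdeg a b x) 2
        (fun x hx => h2le x (Finset.mem_erase.mp hx).1)
      rw [hS, smul_eq_mul] at hcn
      omega
    have hv00 : cdeg a b v0 = 0 := by omega
    have hexact : ∀ w, w ≠ v0 → cdeg a b w = 2 := by
      intro w hw
      by_contra hcon
      have h3 : 3 ≤ cdeg a b w := by
        have := h2le w hw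
        omega
      have hmem : w ∈ Finset.univ.erase v0 := Finset.mem_erase.mpr ⟨hw, Finset.mem_univ w⟩
      have hsplit2 : cdeg a b w + ∑ x ∈ (Finset.univ.erase v0).erase w, cdeg a b x =
          ∑ x ∈ Finset.univ.erase v0, cdeg a b x :=
        Finset.add_sum_erase _ (cdeg a b) hmem
      have hcard2 : ((Finset.univ.erase v0).erase w).card = N - 1 := by
        rw [Finset.card_erase_of_mem hmem, hS]
      have hlow2 : 2 * (N - 1) ≤ ∑ x ∈ (Finset.univ.erase v0).erase w, cdeg a b x := by
        have hcn := Finset.card_nsmul_le_sum ((Finset.univ.erase v0).erase w)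
          (fun x => cdeg a b x) 2
          (fun x hx => h2le x (Finset.mem_erase.mp (Finset.mem_erase.mp hx).2).1)
        rw [hcard2, smul_eq_mul] at hcn
        omega
      omega
    have hep := fun i => not_endpoint_of_cdeg_zero hv00 i
    haveI hEne : Nonempty E := Fintype.card_pos_iff.mp (by omega)
    obtain ⟨i1⟩ := hEne
    have hdeg' : ∀ v' : {v : V // v ≠ v0},
        cdeg (fun i : E => (⟨a i, (hep i).1⟩ : {v : V // v ≠ v0}))
          (fun i : E => (⟨b i, (hep i).2⟩ : {v : V // v ≠ v0})) v' = 2 := by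
      rintro ⟨v, hv⟩
      have h2 := hexact v hv
      rw [cdeg] at h2
      simp only [cdeg, Subtype.mk_eq_mk]
      exact h2
    obtain ⟨σ', hsol', hσ'⟩ := cycle_sol hT (Fintype.card E) {v : V // v ≠ v0} E
      ⟨⟨a i1, (hep i1).1⟩⟩ (fun i => ⟨a i, (hep i).1⟩) (fun i => ⟨b i, (hep i).2⟩) β rfl hdeg'
    have hcontra := Huniq (extFun v0 1 σ') (extFun_w v0 1 σ')
      (by
        intro i
        rw [extFun_ne _ _ _ (hep i).2, extFun_ne _ _ _ (hep i).1]
        exact hsol' i)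
    refine absurd (funext fun x : {v : V // v ≠ v0} => ?_) hσ'
    have hx := congrFun hcontra x.1
    rw [extFun_ne _ _ _ x.2] at hx
    simpa using hx

/-! ### The main theorem -/

theorem tree_of_fixed_point_free
    (n : ℕ) (hn : 1 ≤ n) (T : Type*) [Group T] [Finite T] [Nontrivial T]
    (hT : ¬ ∃ φ : MulAut T, ∀ σ : T, φ σ = σ ↔ σ = 1)
    (f g : (Fin n → T) →* (Fin n → T))
    (θf θg : Fin n → Option (Fin n)) (φf φg : Fin n → (T →* T))
    (hf : End0Data θf φf f) (hg : End0Data θg φg g)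
    (hfpf : ∀ σ : Fin n → T, f σ = g σ ↔ σ = 1) :
    MGraph.IsTree fun i => s(θf i, θg i) := by
  classical
  have hβ : ∀ i : Fin n, ∃ βi : MulAut T, ∀ σ : Option (Fin n) → T, σ none = 1 →
      ((f (fun j => σ (some j)) i = g (fun j => σ (some j)) i) ↔ σ (θg i) = βi (σ (θf i))) := by
    intro i
    rcases hjf : θf i with _ | j <;> rcases hjg : θg i with _ | k
    · refine ⟨1, fun σ h0 => ?_⟩
      rw [hf.2 (fun j => σ (some j)) i, hg.2 (fun j => σ (some j)) i, hjf, hjg]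
      simp [h0]
    · have hbg : Function.Bijective (φg i) := hg.1 i (by rw [hjg]; rfl)
      refine ⟨1, fun σ h0 => ?_⟩
      rw [hf.2 (fun j => σ (some j)) i, hg.2 (fun j => σ (some j)) i, hjf, hjg]
      simp only [Option.elim_none, Option.elim_some, MulAut.one_apply, h0]
      constructor
      · intro h
        exact hbg.1 (by rw [← h, map_one])
      · intro h
        rw [h, map_one]
    · have hbf : Function.Bijective (φf i) := hf.1 i (by rw [hjf]; rfl)
      refine ⟨1, fun σ h0 => ?_⟩
      rw [hf.2 (fun j => σ (some j)) i, hg.2 (fun j => σ (some j)) i, hjf, hjg]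
      simp only [Option.elim_none, Option.elim_some, MulAut.one_apply, h0]
      constructor
      · intro h
        exact (hbf.1 (by rw [h, map_one])).symm
      · intro h
        rw [← h, map_one]
    · have hbf : Function.Bijective (φf i) := hf.1 i (by rw [hjf]; rfl)
      have hbg : Function.Bijective (φg i) := hg.1 i (by rw [hjg]; rfl)
      refine ⟨(MulEquiv.ofBijective (φf i) hbf).trans (MulEquiv.ofBijective (φg i) hbg).symm,
        fun σ h0 => ?_⟩
      rw [hf.2 (fun j => σ (some j)) i, hg.2 (fun j => σ (some j)) i, hjf, hjg]
      simp only [Option.elim_some]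
      rw [show ((MulEquiv.ofBijective (φf i) hbf).trans
          (MulEquiv.ofBijective (φg i) hbg).symm : MulAut T) (σ (some j)) =
          (MulEquiv.ofBijective (φg i) hbg).symm ((MulEquiv.ofBijective (φf i) hbf) (σ (some j)))
        from rfl]
      rw [MulEquiv.eq_symm_apply, MulEquiv.ofBijective_apply, MulEquiv.ofBijective_apply]
      exact eq_comm
  choose β hβs using hβ
  have Huniq : ∀ σ : Option (Fin n) → T, σ none = 1 → CSol θf θg β σ → σ = 1 := by
    intro σ h0 hsol
    have hτ : (fun j => σ (some j)) = (1 : Fin n → T) :=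
      (hfpf (fun j => σ (some j))).mp (funext fun i => (hβs i σ h0).mpr (hsol i))
    funext v
    cases v with
    | none => exact h0
    | some j => exact congrFun hτ j
  have hmain := tree_of_unique hT n (Option (Fin n)) (Fin n) none θf θg β (by simp)
    (by simp) Huniq
  exact hmain
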